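/- Descartes-type sparsity bound: a nonzero univariate real polynomial p having at most t nonzero coefficients (i.e. at most t monomials) has at most t − 1 distinct roots in the open interval (0, ∞), regardless of its degree. -/

import Mathlib

open Polynomial Set

private lemma descartes_aux : ∀ (t : ℕ) (p : Polynomial ℝ), p ≠ 0 → p.support.card ≤ t →
    {x : ℝ | 0 < x ∧ p.eval x = 0}.ncard ≤ t - 1 := by
  intro t
  induction t with
  | zero =>
    intro p hp ht
    exact absurd (Polynomial.support_eq_empty.mp (Finset.card_eq_zero.mp (Nat.le_zero.mp ht))) hp
  | succ t ih =>
    intro p hp ht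
    rcases le_or_gt p.support.card t with h | h
    · exact (ih p hp h).trans (Nat.sub_le_sub_right (Nat.le_succ t) 1)
    -- extract X^m
    set m := p.natTrailingDegree with hm
    obtain ⟨q, hq⟩ : X ^ m ∣ p := Polynomial.X_pow_dvd_iff.mpr
      fun d hd => Polynomial.coeff_eq_zero_of_lt_natTrailingDegree hd
    have hq0 : q ≠ 0 := by rintro rfl; simp at hq; exact hp hq
    have hXm : (X : ℝ[X]) ^ m ≠ 0 := pow_ne_zero _ Polynomial.X_ne_zero
    have hntq : q.natTrailingDegree = 0 := by
      have := Polynomial.natTrailingDegree_mul hXm hq0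
      rw [← hq, Polynomial.natTrailingDegree_X_pow] at this
      omega
    have hc0 : q.coeff 0 ≠ 0 := by
      rcases Polynomial.natTrailingDegree_eq_zero.mp hntq with h' | h'
      · exact absurd h' hq0
      · exact h'
    -- same positive roots
    have hsets : {x : ℝ | 0 < x ∧ p.eval x = 0} = {x : ℝ | 0 < x ∧ q.eval x = 0} := by
      ext x
      simp only [Set.mem_setOf_eq, hq, Polynomial.eval_mul, Polynomial.eval_pow,
        Polynomial.eval_X, mul_eq_zero, pow_eq_zero_iff']
      constructor
      · rintro ⟨hx, h' | h'⟩
        · exact absurd h'.1 hx.ne'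
        · exact ⟨hx, h'⟩
      · rintro ⟨hx, h'⟩; exact ⟨hx, Or.inr h'⟩
    rw [hsets]
    -- support card of q
    have hsupq : q.support.card ≤ t + 1 := by
      refine le_trans ?_ ht
      refine Finset.card_le_card_of_injOn (· + m) (fun n hn => ?_) (fun a _ b _ hab => by simpa using hab)
      rw [Finset.mem_coe, Polynomial.mem_support_iff, hq, Polynomial.coeff_X_pow_mul]
      exact Polynomial.mem_support_iff.mp hn
    rcases eq_or_ne q.derivative 0 with hd | hd
    · -- q is a nonzero constant, no roots
      have hqC : q = Polynomial.C (q.coeff 0) :=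
        Polynomial.eq_C_of_natDegree_eq_zero (Polynomial.natDegree_eq_zero_of_derivative_eq_zero hd)
      have : {x : ℝ | 0 < x ∧ q.eval x = 0} = ∅ := by
        ext x; simp only [Set.mem_setOf_eq, Set.mem_empty_iff_false, iff_false, not_and]
        intro _; rw [hqC]; simpa using hc0
      rw [this]; simp
    · -- derivative support card ≤ t
      have hds : q.derivative.support.card ≤ t := by
        have hsub : q.derivative.support ⊆ (q.support.erase 0).image (· - 1) := by
          intro n hn
          rw [Polynomial.mem_support_iff, Polynomial.coeff_derivative] at hn
          refine Finset.mem_image.mpr ⟨n + 1, Finset.mem_erase.mpr ⟨by omega, ?_⟩, by omega⟩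
          rw [Polynomial.mem_support_iff]
          intro h'; rw [h'] at hn; simp at hn
        have h0 : (0 : ℕ) ∈ q.support := Polynomial.mem_support_iff.mpr hc0
        calc q.derivative.support.card ≤ ((q.support.erase 0).image (· - 1)).card :=
              Finset.card_le_card hsub
          _ ≤ (q.support.erase 0).card := Finset.card_image_le
          _ = q.support.card - 1 := Finset.card_erase_of_mem h0
          _ ≤ t := by omega
      have ht1 : 1 ≤ t := by
        by_contra h'
        have : t = 0 := by omega
        subst this
        exact hd (Polynomial.support_eq_empty.mp (Finset.card_eq_zero.mp (Nat.le_zero.mp hds)))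
      have ihd := ih q.derivative hd hds
      -- finiteness
      have hfinq : {x : ℝ | 0 < x ∧ q.eval x = 0}.Finite :=
        (Polynomial.finite_setOf_isRoot hq0).subset fun x hx => hx.2
      have hfind : {x : ℝ | 0 < x ∧ q.derivative.eval x = 0}.Finite :=
        (Polynomial.finite_setOf_isRoot hd).subset fun x hx => hx.2
      -- Rolle counting
      have key : hfinq.toFinset.card ≤ hfind.toFinset.card + 1 := by
        refine Finset.card_le_of_interleaved fun x hx y hy hxy _ => ?_
        rw [Set.Finite.mem_toFinset] at hx hy
        obtain ⟨z, hz1, hz2⟩ := exists_deriv_eq_zero hxy q.continuousOn (hx.2.trans hy.2.symm)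
        rw [Polynomial.deriv] at hz2
        exact ⟨z, Set.Finite.mem_toFinset _ |>.mpr ⟨hx.1.trans hz1.1, hz2⟩, hz1.1, hz1.2⟩
      rw [Set.ncard_eq_toFinset_card _ hfinq]
      rw [Set.ncard_eq_toFinset_card _ hfind] at ihd
      calc hfinq.toFinset.card ≤ hfind.toFinset.card + 1 := key
        _ ≤ (t - 1) + 1 := Nat.add_le_add_right ihd 1
        _ = t := by omega
        _ = t + 1 - 1 := rfl

/-- **Descartes-type sparsity bound**: a nonzero univariate real polynomial with at most `t`
nonzero coefficients (monomials) has at most `t − 1` distinct roots in `(0, ∞)`,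
regardless of its degree. -/
theorem descartes_sparsity_bound (p : Polynomial ℝ) (hp : p ≠ 0) (t : ℕ)
    (ht : p.support.card ≤ t) :
    {x : ℝ | 0 < x ∧ p.eval x = 0}.ncard ≤ t - 1 := by
  exact descartes_aux t p hp ht
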